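/- Let N ≥ 2, let A_1,…,A_N be finite nonempty sets with 𝒜 := ∏_{k=1}^N A_k, let 0 < ε ≤ 1, and suppose the stage game is weakly payoff-monotonic for player (1,j) with top action a_j^H. Let (Ω, F, P) be a probability space with a filtration (F_t)_{t≥1}, and let X^{(t)} : Ω → 𝒜 × 𝒜 be F_t-measurable random full profiles such that player (1,j) follows the ε-Imitate-If-Better strategy: for every t ≥ 1, every a_j ∈ A_j, and every event C ∈ F_t, P( { X^{(t+1)}_{(1,j)} = a_j } ∩ C ) = ∫_C T_ε( a_j | X^{(t)} ) dP. Then P-almost surely the set { t : s_j(X^{(t)}_1) < s_j(X^{(t)}_2) } is finite, and consequently liminf_{T→∞} (1/T) ∑_{t=1}^T ( s_j(X^{(t)}_1) − s_j(X^{(t)}_2) ) ≥ 0 almost surely; in particular ε-IIB is unbeatable against player (2,j). -/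

import Mathlib

open MeasureTheory
open Filter

/-- Theorem 6 of the paper: in a weakly payoff-monotonic game for
player `(1, j)` with top action `aH`, the ε-Imitate-If-Better strategy is unbeatable
against player `(2, j)`: almost surely the player is beaten in only finitely many
rounds, and hence the time-averaged payoff difference has nonnegative liminf.
`X t` is the (random) full action profile of round `t + 1`; measurability of `X t`
with respect to `F t` is expressed via preimages of singletons (the action space is
finite and discrete). -/
theorem epsIIB_unbeatable_in_weakly_payoff_monotonic
    {N : ℕ} (hN : 2 ≤ N) (A : Fin N → Type*)
    [∀ k, Fintype (A k)] [∀ k, Nonempty (A k)] [∀ k, DecidableEq (A k)]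
    (j : Fin N) (s : (∀ k, A k) → ℝ)
    (ε : ℝ) (hε0 : 0 < ε) (hε1 : ε ≤ 1)
    (aH aL : A j) (rH rL : ℝ) (hr : rL ≤ rH)
    (hH : ∀ a : ∀ k, A k, s (Function.update a j aH) = rH)
    (hL : ∀ a : ∀ k, A k, s (Function.update a j aL) = rL)
    (hbound : ∀ b : ∀ k, A k, rL ≤ s b ∧ s b ≤ rH)
    {Ω : Type*} [m0 : MeasurableSpace Ω]
    (P : MeasureTheory.Measure Ω) [MeasureTheory.IsProbabilityMeasure P]
    (F : MeasureTheory.Filtration ℕ m0)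
    (X : ℕ → Ω → ((∀ k, A k) × (∀ k, A k)))
    (hmeas : ∀ (t : ℕ) (b : (∀ k, A k) × (∀ k, A k)),
      MeasurableSet[F t] {ω | X t ω = b})
    (hstep : ∀ (t : ℕ) (aj : A j) (C : Set Ω), MeasurableSet[F t] C →
      (P ({ω | (X (t + 1) ω).1 j = aj} ∩ C)).toReal =
        ∫ ω in C,
          (((1 - ε) * (if aj = (X t ω).2 j then 1 else 0) +
              ε / (Fintype.card (A j))) *
            (if s (X t ω).1 < s (X t ω).2 then 1 else 0) +
          (if aj = (X t ω).1 j then 1 else 0) *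
            (if s (X t ω).1 ≥ s (X t ω).2 then 1 else 0)) ∂P) :
    ∀ᵐ ω ∂P,
      {t : ℕ | s (X t ω).1 < s (X t ω).2}.Finite ∧
      0 ≤ Filter.liminf
          (fun T : ℕ => (∑ t ∈ Finset.range T, (s (X t ω).1 - s (X t ω).2)) / T)
          Filter.atTop := by
  classical
  have hm0 : (0:ℝ) < (Fintype.card (A j) : ℝ) := by
    exact_mod_cast Fintype.card_pos
  set δ : ℝ := ε / (Fintype.card (A j) : ℝ) with hδdef
  have hδ0 : 0 < δ := div_pos hε0 hm0
  have hδ1 : δ ≤ 1 := by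
    rw [hδdef, div_le_one hm0]
    calc ε ≤ 1 := hε1
    _ ≤ (Fintype.card (A j) : ℝ) := by exact_mod_cast Fintype.card_pos
  set B : ℕ → Set Ω := fun t => {ω | s (X t ω).1 < s (X t ω).2} with hBdef
  set Hs : ℕ → Set Ω := fun t => {ω | (X t ω).1 j = aH} with hHdef
  have hmeasP : ∀ (t : ℕ) (p : ((∀ k, A k) × (∀ k, A k)) → Prop),
      MeasurableSet[F t] {ω | p (X t ω)} := by
    intro t p
    have h : {ω | p (X t ω)} = ⋃ b ∈ {b | p b}, {ω | X t ω = b} := by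
      ext ω; simp
    rw [h]
    exact MeasurableSet.biUnion (Set.to_countable _) (fun b _ => hmeas t b)
  have hB : ∀ t, MeasurableSet[F t] (B t) := fun t => hmeasP t (fun b => s b.1 < s b.2)
  have hHm : ∀ t, MeasurableSet[F t] (Hs t) := fun t => hmeasP t (fun b => b.1 j = aH)
  -- key computation
  have key : ∀ (t : ℕ) (b : (∀ k, A k) × (∀ k, A k)) (aj : A j) (C : Set Ω),
      MeasurableSet[F t] C → C ⊆ {ω | X t ω = b} →
      (P ({ω | (X (t+1) ω).1 j = aj} ∩ C)).toReal =
        (((1 - ε) * (if aj = b.2 j then 1 else 0) + δ) *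
            (if s b.1 < s b.2 then 1 else 0) +
          (if aj = b.1 j then 1 else 0) * (if s b.1 ≥ s b.2 then 1 else 0)) *
          (P C).toReal := by
    intro t b aj C hC hCb
    rw [hstep t aj C hC]
    rw [setIntegral_congr_fun (F.le t C hC)
      (fun ω hω => by rw [hCb hω] : Set.EqOn _
        (fun _ => (((1 - ε) * (if aj = b.2 j then 1 else 0) + δ) *
            (if s b.1 < s b.2 then 1 else 0) +
          (if aj = b.1 j then 1 else 0) * (if s b.1 ≥ s b.2 then 1 else 0))) C)]
    rw [setIntegral_const, smul_eq_mul, mul_comm]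
    rfl
  -- stay lemma
  have stay : ∀ (t : ℕ) (b : (∀ k, A k) × (∀ k, A k)), s b.2 ≤ s b.1 →
      P ({ω | X t ω = b} \ {ω | (X (t+1) ω).1 j = b.1 j}) = 0 := by
    intro t b hb
    set C := {ω | X t ω = b} with hCdef
    set St := {ω | (X (t+1) ω).1 j = b.1 j} with hStdef
    have hStm : MeasurableSet St := F.le (t+1) _ (hmeasP (t+1) (fun b' => b'.1 j = b.1 j))
    have h1 := key t b (b.1 j) C (hmeas t b) (subset_refl _)
    have hcoef : (((1 - ε) * (if b.1 j = b.2 j then (1:ℝ) else 0) + δ) *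
            (if s b.1 < s b.2 then 1 else 0) +
          (if b.1 j = b.1 j then (1:ℝ) else 0) * (if s b.1 ≥ s b.2 then 1 else 0)) = 1 := by
      rw [if_pos rfl, if_neg (not_lt.mpr hb), if_pos hb]
      ring
    rw [hcoef, one_mul] at h1
    have hsplit : P (C ∩ St) + P (C \ St) = P C := measure_inter_add_diff C hStm
    have hne1 : P (C ∩ St) ≠ ⊤ := measure_ne_top P _
    have hne2 : P (C \ St) ≠ ⊤ := measure_ne_top P _
    have h2 : (P (C ∩ St)).toReal + (P (C \ St)).toReal = (P C).toReal := by
      rw [← ENNReal.toReal_add hne1 hne2, hsplit]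
    have h3 : P (St ∩ C) = P (C ∩ St) := by rw [Set.inter_comm]
    rw [h3] at h1
    have h4 : (P (C \ St)).toReal = 0 := by linarith
    exact (ENNReal.toReal_eq_zero_iff _).mp h4 |>.resolve_right hne2
  -- escape per profile
  have escape1 : ∀ (t : ℕ) (b : (∀ k, A k) × (∀ k, A k)) (C : Set Ω),
      MeasurableSet[F t] C → C ⊆ {ω | X t ω = b} → s b.1 < s b.2 →
      (P (C ∩ (Hs (t+1))ᶜ)).toReal ≤ (1 - δ) * (P C).toReal := by
    intro t b C hC hCb hbeat
    have h1 := key t b aH C hC hCb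
    have hrw : {ω | (X (t+1) ω).1 j = aH} = Hs (t+1) := rfl
    rw [hrw] at h1
    have hcoef : δ ≤ (((1 - ε) * (if aH = b.2 j then (1:ℝ) else 0) + δ) *
            (if s b.1 < s b.2 then 1 else 0) +
          (if aH = b.1 j then (1:ℝ) else 0) * (if s b.1 ≥ s b.2 then 1 else 0)) := by
      rw [if_pos hbeat, if_neg (not_le.mpr hbeat)]
      have h0 : (0:ℝ) ≤ (1 - ε) * (if aH = b.2 j then (1:ℝ) else 0) := by
        apply mul_nonneg (by linarith)
        split <;> norm_num
      split <;> nlinarith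
    have hne : P C ≠ ⊤ := measure_ne_top P _
    have hle : δ * (P C).toReal ≤ (P (Hs (t+1) ∩ C)).toReal := by
      rw [h1]
      exact mul_le_mul_of_nonneg_right hcoef ENNReal.toReal_nonneg
    have hsplit : P (C ∩ Hs (t+1)) + P (C \ Hs (t+1)) = P C :=
      measure_inter_add_diff C (F.le (t+1) _ (hHm (t+1)))
    have h2 : (P (C ∩ Hs (t+1))).toReal + (P (C \ Hs (t+1))).toReal = (P C).toReal := by
      rw [← ENNReal.toReal_add (measure_ne_top P _) (measure_ne_top P _), hsplit]
    have h3 : P (Hs (t+1) ∩ C) = P (C ∩ Hs (t+1)) := by rw [Set.inter_comm]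
    rw [h3] at hle
    have : C ∩ (Hs (t+1))ᶜ = C \ Hs (t+1) := rfl
    rw [this]
    nlinarith [ENNReal.toReal_nonneg (a := P C)]
  -- general escape lemma
  have escape : ∀ (t : ℕ) (C : Set Ω), MeasurableSet[F t] C → C ⊆ B t →
      (P (C ∩ (Hs (t+1))ᶜ)).toReal ≤ (1 - δ) * (P C).toReal := by
    intro t C hC hCB
    have hpart : ∀ (D : Set Ω), MeasurableSet D →
        (P D).toReal = ∑ b : ((∀ k, A k) × (∀ k, A k)),
          (P (D ∩ {ω | X t ω = b})).toReal := by
      intro D hD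
      have hcover : D = ⋃ b ∈ (Finset.univ : Finset ((∀ k, A k) × (∀ k, A k))),
          (D ∩ {ω | X t ω = b}) := by
        ext ω; simp
      have hdisj : (↑(Finset.univ : Finset ((∀ k, A k) × (∀ k, A k))) : Set _).PairwiseDisjoint
          (fun b => D ∩ {ω | X t ω = b}) := by
        intro b _ b' _ hbb'
        apply Set.disjoint_left.mpr
        rintro ω ⟨_, h1⟩ ⟨_, h2⟩
        exact hbb' (h1.symm.trans h2)
      have := measure_biUnion_finset (μ := P) hdisj
        (fun b _ => hD.inter (F.le t _ (hmeas t b)))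
      rw [← hcover] at this
      rw [this, ENNReal.toReal_sum (fun b _ => measure_ne_top P _)]
    have hCm : MeasurableSet C := F.le t _ hC
    rw [hpart (C ∩ (Hs (t+1))ᶜ) (hCm.inter (F.le (t+1) _ (hHm (t+1))).compl),
      hpart C hCm, Finset.mul_sum]
    apply Finset.sum_le_sum
    intro b _
    by_cases hbeat : s b.1 < s b.2
    · have hsub : C ∩ {ω | X t ω = b} ⊆ {ω | X t ω = b} := Set.inter_subset_right
      have := escape1 t b (C ∩ {ω | X t ω = b}) (hC.inter (hmeas t b)) hsub hbeat
      calc (P (C ∩ (Hs (t+1))ᶜ ∩ {ω | X t ω = b})).toReal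
          = (P (C ∩ {ω | X t ω = b} ∩ (Hs (t+1))ᶜ)).toReal := by
            rw [Set.inter_right_comm]
        _ ≤ (1 - δ) * (P (C ∩ {ω | X t ω = b})).toReal := this
    · have hempty : C ∩ (Hs (t+1))ᶜ ∩ {ω | X t ω = b} = ∅ := by
        ext ω
        simp only [Set.mem_inter_iff, Set.mem_empty_iff_false, iff_false, not_and]
        rintro ⟨hωC, -⟩ hωb
        exact hbeat (by rw [← hωb]; exact hCB hωC)
      rw [hempty]
      simp only [measure_empty, ENNReal.toReal_zero]
      exact mul_nonneg (by linarith) ENNReal.toReal_nonneg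
  -- counting beaten rounds
  set cnt : ℕ → Ω → ℕ := fun t ω => ∑ u ∈ Finset.range t, (if ω ∈ B u then 1 else 0)
    with hcntdef
  have hcntm : ∀ t n, MeasurableSet[F t] {ω | cnt t ω = n} := by
    intro t n
    have hmble : Measurable[F t] (cnt t) := by
      apply Finset.measurable_sum
      intro u hu
      have hBu : MeasurableSet[F t] (B u) :=
        F.mono (le_of_lt (Finset.mem_range.mp hu)) _ (hB u)
      exact Measurable.ite hBu measurable_const measurable_const
    exact hmble (measurableSet_singleton n)
  set G : ℕ → ℕ → Set Ω := fun n t =>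
    {ω | cnt t ω = n} ∩ B t ∩ ⋂ u ∈ Finset.range (t+1), (Hs u)ᶜ with hGdef
  have hGmeas : ∀ n t, MeasurableSet[F t] (G n t) := by
    intro n t
    refine ((hcntm t n).inter (hB t)).inter ?_
    refine MeasurableSet.biInter (Set.to_countable _) (fun u hu => ?_)
    exact (F.mono (Nat.lt_succ_iff.mp (Finset.mem_range.mp hu)) _ (hHm u)).compl
  have hGsubB : ∀ n t, G n t ⊆ B t := fun n t => fun ω hω => hω.1.2
  -- cnt facts
  have hcnt_mono : ∀ (ω : Ω) {t t' : ℕ}, t ≤ t' → cnt t ω ≤ cnt t' ω := by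
    intro ω t t' h
    apply Finset.sum_le_sum_of_subset (Finset.range_subset_range.mpr h)
  have hcnt_succ : ∀ (ω : Ω) (t : ℕ), ω ∈ B t → cnt (t+1) ω = cnt t ω + 1 := by
    intro ω t hω
    rw [hcntdef]
    simp only [Finset.sum_range_succ, if_pos hω]
  have hGdisj0 : ∀ n t t', t < t' → Disjoint (G n t) (G n t') := by
    intro n t t' h
    apply Set.disjoint_left.mpr
    rintro ω ⟨⟨hc, hb⟩, -⟩ ⟨⟨hc', -⟩, -⟩
    have hc2 : cnt t ω = n := hc
    have hc2' : cnt t' ω = n := hc'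
    have hlt : cnt t ω + 1 ≤ cnt t' ω := by
      rw [← hcnt_succ ω t hb]
      exact hcnt_mono ω h
    omega
  have hGdisj : ∀ n, Pairwise (Function.onFun Disjoint (G n)) := by
    intro n t t' htt'
    rcases htt'.lt_or_gt with h | h
    · exact hGdisj0 n t t' h
    · exact (hGdisj0 n t' t h).symm
  set U : ℕ → Set Ω := fun n => ⋃ t, G n t with hUdef
  have hUrec : ∀ n, U (n+1) ⊆ ⋃ t, (G n t ∩ (Hs (t+1))ᶜ) := by
    intro n ω hω
    obtain ⟨t', ht'⟩ := Set.mem_iUnion.mp hω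
    obtain ⟨⟨hc, hb⟩, hHc⟩ := ht'
    have hc' : cnt t' ω = n + 1 := hc
    have hHc' : ∀ u, u ≤ t' → ω ∉ Hs u := by
      intro u hu
      have := Set.mem_iInter₂.mp hHc u (Finset.mem_range.mpr (Nat.lt_succ_of_le hu))
      exact this
    classical
    set S := (Finset.range t').filter (fun u => ω ∈ B u) with hSdef
    have hcardeq : ∀ T : ℕ, ((Finset.range T).filter (fun u => ω ∈ B u)).card = cnt T ω := by
      intro T
      rw [hcntdef]
      exact Finset.card_filter _ _
    have hScard : S.card = n + 1 := by rw [hSdef, hcardeq, hc']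
    have hSne : S.Nonempty := Finset.card_pos.mp (by omega)
    set tm := S.max' hSne with htmdef
    have htmS : tm ∈ S := Finset.max'_mem S hSne
    have htmlt : tm < t' := Finset.mem_range.mp (Finset.mem_filter.mp htmS).1
    have hbtm : ω ∈ B tm := (Finset.mem_filter.mp htmS).2
    have herase : (Finset.range tm).filter (fun u => ω ∈ B u) = S.erase tm := by
      ext u
      simp only [Finset.mem_filter, Finset.mem_erase, Finset.mem_range, hSdef]
      constructor
      · rintro ⟨hu, hbu⟩
        exact ⟨Nat.ne_of_lt hu, lt_trans hu htmlt, hbu⟩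
      · rintro ⟨hne, hu, hbu⟩
        refine ⟨?_, hbu⟩
        have : u ≤ tm := Finset.le_max' S u (Finset.mem_filter.mpr ⟨Finset.mem_range.mpr hu, hbu⟩)
        omega
    have hcnttm : cnt tm ω = n := by
      rw [← hcardeq, herase, Finset.card_erase_of_mem htmS, hScard]
      omega
    refine Set.mem_iUnion.mpr ⟨tm, ⟨⟨hcnttm, hbtm⟩, ?_⟩, ?_⟩
    · refine Set.mem_iInter₂.mpr (fun u hu => ?_)
      exact hHc' u (le_trans (Nat.lt_succ_iff.mp (Finset.mem_range.mp hu)) (le_of_lt htmlt))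
    · exact hHc' (tm+1) htmlt
  have hUstep : ∀ n, P (U (n+1)) ≤ ENNReal.ofReal (1 - δ) * P (U n) := by
    intro n
    have h2 : ∀ t, P (G n t ∩ (Hs (t+1))ᶜ) ≤ ENNReal.ofReal (1 - δ) * P (G n t) := by
      intro t
      have he := escape t (G n t) (hGmeas n t) (hGsubB n t)
      have hne : P (G n t) ≠ ⊤ := measure_ne_top P _
      have hne2 : P (G n t ∩ (Hs (t+1))ᶜ) ≠ ⊤ := measure_ne_top P _
      calc P (G n t ∩ (Hs (t+1))ᶜ)
          = ENNReal.ofReal (P (G n t ∩ (Hs (t+1))ᶜ)).toReal :=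
            (ENNReal.ofReal_toReal hne2).symm
        _ ≤ ENNReal.ofReal ((1 - δ) * (P (G n t)).toReal) := ENNReal.ofReal_le_ofReal he
        _ = ENNReal.ofReal (1 - δ) * ENNReal.ofReal (P (G n t)).toReal :=
            ENNReal.ofReal_mul (by linarith)
        _ = ENNReal.ofReal (1 - δ) * P (G n t) := by rw [ENNReal.ofReal_toReal hne]
    calc P (U (n+1)) ≤ P (⋃ t, (G n t ∩ (Hs (t+1))ᶜ)) := measure_mono (hUrec n)
      _ ≤ ∑' t, P (G n t ∩ (Hs (t+1))ᶜ) := measure_iUnion_le _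
      _ ≤ ∑' t, ENNReal.ofReal (1 - δ) * P (G n t) := ENNReal.tsum_le_tsum h2
      _ = ENNReal.ofReal (1 - δ) * ∑' t, P (G n t) := ENNReal.tsum_mul_left
      _ = ENNReal.ofReal (1 - δ) * P (U n) := by
          rw [measure_iUnion (hGdisj n) (fun t => F.le t _ (hGmeas n t))]
  have hUbound : ∀ n, P (U n) ≤ (ENNReal.ofReal (1 - δ))^n := by
    intro n
    induction n with
    | zero => simpa using prob_le_one
    | succ n ih =>
      calc P (U (n+1)) ≤ ENNReal.ofReal (1-δ) * P (U n) := hUstep n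
        _ ≤ ENNReal.ofReal (1-δ) * (ENNReal.ofReal (1-δ))^n := mul_le_mul_right ih _
        _ = (ENNReal.ofReal (1-δ))^(n+1) := by rw [pow_succ, mul_comm]
  have hInull : P (⋂ n, U n) = 0 := by
    have hlt1 : ENNReal.ofReal (1 - δ) < 1 := by
      rw [ENNReal.ofReal_lt_one]; linarith
    have htend := ENNReal.tendsto_pow_atTop_nhds_zero_of_lt_one hlt1
    refine le_antisymm ?_ zero_le
    exact ge_of_tendsto' htend (fun n =>
      le_trans (measure_mono (Set.iInter_subset _ n)) (hUbound n))
  set SN : Set Ω := ⋃ t, ⋃ b : ((∀ k, A k) × (∀ k, A k)), ⋃ (_ : s b.2 ≤ s b.1),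
      ({ω | X t ω = b} \ {ω | (X (t+1) ω).1 j = b.1 j}) with hSNdef
  have hSNnull : P SN = 0 :=
    measure_iUnion_null fun t => measure_iUnion_null fun b =>
      measure_iUnion_null fun hb => stay t b hb
  -- pointwise facts
  have hHpay : ∀ a : ∀ k, A k, a j = aH → s a = rH := by
    intro a ha
    have hupd : Function.update a j aH = a := by
      funext k
      rcases eq_or_ne k j with rfl | hk
      · simp [ha]
      · simp [Function.update_of_ne hk]
    rw [← hupd]; exact hH a
  have hmain : ∀ ω, ω ∉ (⋂ n, U n) ∪ SN →
      {t : ℕ | s (X t ω).1 < s (X t ω).2}.Finite := by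
    intro ω hω
    have hωU : ω ∉ ⋂ n, U n := fun h => hω (Or.inl h)
    have hωSN : ω ∉ SN := fun h => hω (Or.inr h)
    have hkeep : ∀ t, ω ∉ B t → (X (t+1) ω).1 j = (X t ω).1 j := by
      intro t hnb
      by_contra hne
      apply hωSN
      rw [hSNdef]
      refine Set.mem_iUnion.mpr ⟨t, Set.mem_iUnion.mpr ⟨X t ω, Set.mem_iUnion.mpr
        ⟨le_of_not_gt hnb, ⟨rfl, hne⟩⟩⟩⟩
    have hHnotB : ∀ t, ω ∈ Hs t → ω ∉ B t := by
      intro t ht hbt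
      have h1 : s (X t ω).1 = rH := hHpay _ ht
      have h2 : s (X t ω).2 ≤ rH := (hbound _).2
      have h3 : s (X t ω).1 < s (X t ω).2 := hbt
      linarith
    have habs : ∀ t, ω ∈ Hs t → ω ∈ Hs (t+1) := by
      intro t ht
      have hk := hkeep t (hHnotB t ht)
      show (X (t+1) ω).1 j = aH
      rw [hk]; exact ht
    by_contra hinf
    have hinf' : {u : ℕ | ω ∈ B u}.Infinite := hinf
    have hnever : ∀ t, ω ∉ Hs t := by
      intro t ht
      have hall : ∀ v, t ≤ v → ω ∈ Hs v := by
        intro v hv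
        induction v, hv using Nat.le_induction with
        | base => exact ht
        | succ v hv ih => exact habs v ih
      have hsubI : {u : ℕ | ω ∈ B u} ⊆ Set.Iio t := by
        intro u hu
        by_contra h
        exact hHnotB u (hall u (le_of_not_gt h)) hu
      exact hinf' (Set.Finite.subset (Set.finite_Iio t) hsubI)
    have hmem : ∀ n, ω ∈ U n := by
      intro n
      set p : ℕ → Prop := fun u => ω ∈ B u with hp
      have hpinf : (setOf p).Infinite := hinf'
      set tn := Nat.nth p n with htn
      have hptn : p tn := Nat.nth_mem_of_infinite hpinf n
      have hcount : Nat.count p tn = n := Nat.count_nth (fun hf => absurd hf hpinf)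
      have hcnttn : cnt tn ω = n := by
        rw [← hcount, Nat.count_eq_card_filter_range, Finset.card_filter]
      refine Set.mem_iUnion.mpr ⟨tn, ⟨⟨hcnttn, hptn⟩, ?_⟩⟩
      exact Set.mem_iInter₂.mpr fun u _ => hnever u
    exact hωU (Set.mem_iInter.mpr hmem)
  -- conclusion
  have hZ : P ((⋂ n, U n) ∪ SN) = 0 := measure_union_null hInull hSNnull
  have hae : ∀ᵐ ω ∂P, ω ∉ ((⋂ n, U n) ∪ SN) := measure_eq_zero_iff_ae_notMem.mp hZ
  have final : ∀ᵐ ω ∂P,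
      {t : ℕ | s (X t ω).1 < s (X t ω).2}.Finite ∧
      0 ≤ Filter.liminf
          (fun T : ℕ => (∑ t ∈ Finset.range T, (s (X t ω).1 - s (X t ω).2)) / T)
          Filter.atTop := by
    filter_upwards [hae] with ω hω
    have hfin := hmain ω hω
    refine ⟨hfin, ?_⟩
    obtain ⟨T₁, hT₁⟩ := hfin.bddAbove
    have hT₀ : ∀ t, T₁ + 1 ≤ t → s (X t ω).2 ≤ s (X t ω).1 := by
      intro t ht
      by_contra h
      have := hT₁ (not_le.mp h)
      omega
    set T₀ := T₁ + 1 with hT₀def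
    set c : ℝ := ∑ t ∈ Finset.range T₀, (s (X t ω).1 - s (X t ω).2) with hcdef
    set v : ℕ → ℝ := fun T => (∑ t ∈ Finset.range T, (s (X t ω).1 - s (X t ω).2)) / T
      with hvdef
    have hsum : ∀ T, T₀ ≤ T →
        c ≤ ∑ t ∈ Finset.range T, (s (X t ω).1 - s (X t ω).2) := by
      intro T hT
      rw [← Finset.sum_range_add_sum_Ico _ hT]
      have h0 : 0 ≤ ∑ t ∈ Finset.Ico T₀ T, (s (X t ω).1 - s (X t ω).2) :=
        Finset.sum_nonneg fun t ht => by
          have := hT₀ t (Finset.mem_Ico.mp ht).1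
          linarith
      linarith
    have hev : ∀ᶠ T : ℕ in atTop, c / (T:ℝ) ≤ v T := by
      filter_upwards [eventually_ge_atTop (max T₀ 1)] with T hT
      have h1 : (1:ℕ) ≤ T := le_trans (le_max_right _ _) hT
      have hTpos : (0:ℝ) < (T:ℝ) := by exact_mod_cast h1
      exact (div_le_div_iff_of_pos_right hTpos).mpr (hsum T (le_trans (le_max_left _ _) hT))
    have htend := tendsto_const_div_atTop_nhds_zero_nat c
    have hliminf0 : liminf (fun T : ℕ => c / (T:ℝ)) atTop = 0 := htend.liminf_eq
    rw [← hliminf0]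
    refine Filter.liminf_le_liminf hev htend.isBoundedUnder_ge ?_
    refine Filter.IsBoundedUnder.isCoboundedUnder_ge ⟨rH - rL, ?_⟩
    refine eventually_map.mpr (Eventually.of_forall fun T => ?_)
    show v T ≤ rH - rL
    rcases Nat.eq_zero_or_pos T with rfl | hTpos
    · simp [hvdef]
      linarith
    · have hTpos' : (0:ℝ) < (T:ℝ) := by exact_mod_cast hTpos
      rw [hvdef, div_le_iff₀ hTpos']
      calc ∑ t ∈ Finset.range T, (s (X t ω).1 - s (X t ω).2)
          ≤ ∑ t ∈ Finset.range T, (rH - rL) := by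
            refine Finset.sum_le_sum fun t _ => ?_
            have h1 := (hbound (X t ω).1).2
            have h2 := (hbound (X t ω).2).1
            linarith
        _ = T * (rH - rL) := by
            rw [Finset.sum_const, Finset.card_range, nsmul_eq_mul]
        _ = (rH - rL) * T := by ring
  exact final
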